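/- The subgroup E of H(A) generated by the elements μ(a) = u_a v_a (a ∈ A) is free, freely generated by {μ(a) : a ∈ A}. -/

import Mathlib

namespace Paper

/-- The formal inverse of a signed word. -/
def wordInv {α : Type} (w : List (α × Bool)) : List (α × Bool) :=
  (w.map fun p => (p.1, !p.2)).reverse

/-- `u` is a cyclic shift of `w` or of `w⁻¹`. -/
def CyclicShiftOf {α : Type} (w u : List (α × Bool)) : Prop :=
  ∃ n : ℕ, u = w.rotate n ∨ u = (wordInv w).rotate n

/-- The small cancellation condition `C'(1/12)` for a set of words:
for every two different cyclic shifts `u, v` of words in `Q^{±1}`, the length of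
their maximal common prefix is smaller than `(1/12)·min(|u|,|v|)`. -/
def C12 {α : Type} (Q : Set (List (α × Bool))) : Prop :=
  ∀ u v : List (α × Bool),
    (∃ w ∈ Q, CyclicShiftOf w u) → (∃ w ∈ Q, CyclicShiftOf w v) → u ≠ v →
      ∀ p : List (α × Bool), p <+: u → p <+: v → 12 * p.length < min u.length v.length

/-- The small cancellation condition `C'(1/12)` for an indexed family of words. -/
def FamC12 {ι α : Type} (w : ι → List (α × Bool)) : Prop :=
  ∀ (a b : ι) (u v : List (α × Bool)),
    CyclicShiftOf (w a) u → CyclicShiftOf (w b) v → ¬(a = b ∧ u = v) →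
      ∀ p : List (α × Bool), p <+: u → p <+: v → 12 * p.length < min u.length v.length

/-- A positive word, viewed as a signed word. -/
def signed {α : Type} (w : List α) : List (α × Bool) := w.map fun c => (c, true)

/-- `C'(1/12)` for a set of positive words. -/
def posC12 {α : Type} (Q : Set (List α)) : Prop := C12 (signed '' Q)

/-- A signed word is (freely) reduced. -/
def ReducedW {α : Type} [DecidableEq α] (w : List (α × Bool)) : Prop :=
  FreeGroup.reduce w = w

/-- A signed word is cyclically reduced. -/
def CyclicallyReducedW {α : Type} [DecidableEq α] (w : List (α × Bool)) : Prop :=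
  FreeGroup.reduce (w ++ w) = w ++ w

end Paper
namespace Paper

/-- Evaluate a signed word in a group, via a map on letters. -/
def evalWord {α G : Type} [Group G] (f : α → G) (w : List (α × Bool)) : G :=
  (w.map fun p => if p.2 then f p.1 else (f p.1)⁻¹).prod

/-- Evaluate a positive word in a group, via a map on letters. -/
def evalPos {α G : Type} [Group G] (f : α → G) (w : List α) : G :=
  (w.map f).prod

end Paper
namespace Paper

/-- The alphabet of the group `H(A)`: the disjoint union of `A` and the
two-letter alphabets `B`, `X`, `Y` (each modelled by `Bool`). -/
abbrev HL (A : Type) : Type := A ⊕ (Bool ⊕ (Bool ⊕ Bool))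

def inA {A : Type} (a : A) : HL A := Sum.inl a
def inB {A : Type} (b : Bool) : HL A := Sum.inr (Sum.inl b)
def inX {A : Type} (x : Bool) : HL A := Sum.inr (Sum.inr (Sum.inl x))
def inY {A : Type} (y : Bool) : HL A := Sum.inr (Sum.inr (Sum.inr y))

def gA {A : Type} (a : A) : FreeGroup (HL A) := FreeGroup.of (inA a)
def gB {A : Type} (b : Bool) : FreeGroup (HL A) := FreeGroup.of (inB b)
def gX {A : Type} (x : Bool) : FreeGroup (HL A) := FreeGroup.of (inX x)
def gY {A : Type} (y : Bool) : FreeGroup (HL A) := FreeGroup.of (inY y)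

/-- The defining data of the group `H(A)`: the maps
`β, β' : A×X → B*`, `χ, χ' : A×X → Y*`, `φ : A×Y → B*`,
`γ : B×Y → Y*`, `ψ : B×X → Y*`. -/
structure HData (A : Type) where
  bet : A → Bool → List Bool
  bet' : A → Bool → List Bool
  chi : A → Bool → List Bool
  chi' : A → Bool → List Bool
  phi : A → Bool → List Bool
  gam : Bool → Bool → List Bool
  psi : Bool → Bool → List Bool

/-- The defining relators of `H(A)`:
`x a = β(a,x) a β'(a,x) χ(a,x) x χ'(a,x)`, `y a = a φ(a,y) y`,
`x b = b ψ(b,x) x`, `y b = b γ(b,y)`. -/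
def HRels {A : Type} (d : HData A) : Set (FreeGroup (HL A)) :=
  { r | ∃ a x, r = gX x * gA a *
      (evalPos gB (d.bet a x) * gA a * evalPos gB (d.bet' a x) *
       evalPos gY (d.chi a x) * gX x * evalPos gY (d.chi' a x))⁻¹ } ∪
  { r | ∃ a y, r = gY y * gA a *
      (gA a * evalPos gB (d.phi a y) * gY y)⁻¹ } ∪
  { r | ∃ b x, r = gX x * gB b *
      (gB b * evalPos gY (d.psi b x) * gX x)⁻¹ } ∪
  { r | ∃ b y, r = gY y * gB b *
      (gB b * evalPos gY (d.gam b y))⁻¹ }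

/-- The group `H(A)`. -/
abbrev HGroup {A : Type} (d : HData A) : Type := PresentedGroup (HRels d)

/-- The small cancellation assumptions on the defining data of `H(A)`: the set
of large sections `χ(A×X) ∪ χ'(A×X) ∪ γ(B×Y) ∪ ψ(B×X)` satisfies `C'(1/12)`,
and so does the set `β(A×X) ∪ β'(A×X) ∪ φ(A×Y)`. -/
def HData.C12cond {A : Type} (d : HData A) : Prop :=
  posC12 ((Set.range fun p : A × Bool => d.chi p.1 p.2) ∪
          (Set.range fun p : A × Bool => d.chi' p.1 p.2) ∪
          (Set.range fun p : Bool × Bool => d.gam p.1 p.2) ∪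
          (Set.range fun p : Bool × Bool => d.psi p.1 p.2)) ∧
  posC12 ((Set.range fun p : A × Bool => d.bet p.1 p.2) ∪
          (Set.range fun p : A × Bool => d.bet' p.1 p.2) ∪
          (Set.range fun p : A × Bool => d.phi p.1 p.2))

/-- The homomorphism from the free group on `A ∪ B` to `H(A)` induced by the
generators. -/
def homAB {A : Type} (d : HData A) : FreeGroup (A ⊕ Bool) →* HGroup d :=
  FreeGroup.lift fun c => PresentedGroup.of (Sum.elim inA inB c)

/-- The homomorphism from the free group on `X ∪ Y` to `H(A)` induced by the
generators. -/
def homXY {A : Type} (d : HData A) : FreeGroup (Bool ⊕ Bool) →* HGroup d :=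
  FreeGroup.lift fun c => PresentedGroup.of (Sum.elim inX inY c)

end Paper
namespace Paper

/-- The blocks `u_a` (positive words in `A`) and `v_a` (positive words in `X`). -/
structure MuData (A : Type) where
  u : A → List A
  v : A → List Bool

/-- The standing assumptions on the blocks: both families consist of nonempty
positive words and satisfy `C'(1/12)`. -/
def MuData.OK {A : Type} (md : MuData A) : Prop :=
  FamC12 (fun a => signed (md.u a)) ∧ FamC12 (fun a => signed (md.v a)) ∧
  (∀ a, md.u a ≠ []) ∧ (∀ a, md.v a ≠ [])

/-- The element `μ(a) = u_a v_a` of `H(A)`. -/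
def muH {A : Type} (d : HData A) (md : MuData A) (a : A) : HGroup d :=
  evalPos (fun a' => (PresentedGroup.of (inA a') : HGroup d)) (md.u a) *
  evalPos (fun x => (PresentedGroup.of (inX x) : HGroup d)) (md.v a)

/-- The subgroup `E = ⟨μ(a) : a ∈ A⟩` of `H(A)`. -/
def Esub {A : Type} (d : HData A) (md : MuData A) : Subgroup (HGroup d) :=
  Subgroup.closure (Set.range (muH d md))

end Paper
namespace Paper
set_option linter.unusedSectionVars false
section Words

variable {α : Type} [DecidableEq α]

/-- non-cancelling pair of letters -/
def NC (p q : α × Bool) : Prop := ¬(p.1 = q.1 ∧ p.2 = !q.2)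

lemma wordInv_eq_invRev (w : List (α × Bool)) : wordInv w = FreeGroup.invRev w := rfl

lemma reduce_eq_self_of_chain {L : List (α × Bool)} (h : List.Chain' NC L) :
    FreeGroup.reduce L = L := by
  induction L with
  | nil => rfl
  | cons x t ih =>
    have ht : List.Chain' NC t := (List.isChain_cons.mp h).2
    rw [FreeGroup.reduce.cons, ih ht]
    cases t with
    | nil => rfl
    | cons y s =>
      have hxy : NC x y := (List.isChain_cons_cons.mp h).1
      simp only [NC] at hxy
      simp [if_neg hxy]

lemma chain_of_reduce_eq_self {L : List (α × Bool)} (h : FreeGroup.reduce L = L) :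
    List.Chain' NC L := by
  by_contra hc
  -- extract a cancelling adjacent pair
  have key : ∀ (L : List (α × Bool)), ¬ List.Chain' NC L →
      ∃ P p q T, L = P ++ p :: q :: T ∧ p.1 = q.1 ∧ p.2 = !q.2 := by
    intro L
    induction L with
    | nil => intro hc; exact absurd List.isChain_nil hc
    | cons x t iht =>
      intro hc
      cases t with
      | nil => exact absurd (List.isChain_singleton x) hc
      | cons y s =>
        simp only [List.Chain', List.isChain_cons_cons] at hc
        push_neg at hc
        by_cases hxy : NC x y
        · obtain ⟨P, p, q, T, hEq, h1, h2⟩ := iht (hc hxy)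
          exact ⟨x :: P, p, q, T, by rw [hEq]; rfl, h1, h2⟩
        · simp only [NC, not_not] at hxy
          exact ⟨[], x, y, s, rfl, hxy.1, hxy.2⟩
  obtain ⟨P, p, q, T, hEq, h1, h2⟩ := key L hc
  have hstep : FreeGroup.Red.Step L (P ++ T) := by
    rw [hEq]
    have : p = (q.1, !q.2) := by
      ext
      · exact h1
      · simpa using h2
    rw [this]
    have : q = (q.1, q.2) := rfl
    conv_lhs => rw [this]
    have := @FreeGroup.Red.Step.not α P T q.1 (!q.2)
    simpa using this
  have hred : FreeGroup.Red L (P ++ T) := Relation.ReflTransGen.single hstep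
  have hlen : (FreeGroup.reduce (P ++ T)).length ≤ (P ++ T).length :=
    FreeGroup.Red.length_le FreeGroup.reduce.red
  have heq2 : FreeGroup.reduce L = FreeGroup.reduce (P ++ T) := FreeGroup.reduce.eq_of_red hred
  rw [h] at heq2
  have : L.length ≤ (P ++ T).length := heq2 ▸ hlen
  rw [hEq] at this
  simp at this

lemma chain_toWord (g : FreeGroup α) : List.Chain' NC g.toWord :=
  chain_of_reduce_eq_self (FreeGroup.reduce_toWord g)

lemma wordInv_nil : wordInv ([] : List (α × Bool)) = [] := rfl

lemma wordInv_length (L : List (α × Bool)) : (wordInv L).length = L.length := by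
  simp [wordInv]

lemma wordInv_wordInv (L : List (α × Bool)) : wordInv (wordInv L) = L := by
  rw [wordInv_eq_invRev, wordInv_eq_invRev]; exact FreeGroup.invRev_invRev

lemma wordInv_injective : Function.Injective (@wordInv α) := by
  intro a b h
  rw [← wordInv_wordInv a, h, wordInv_wordInv]

lemma wordInv_cons (y : α × Bool) (M : List (α × Bool)) :
    wordInv (y :: M) = wordInv M ++ [(y.1, !y.2)] := by
  simp [wordInv]

lemma wordInv_drop (P : List (α × Bool)) (j : ℕ) :
    (wordInv P).drop j = wordInv (P.take (P.length - j)) := by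
  simp only [wordInv, List.drop_reverse, List.length_map]
  rw [← List.map_take]

lemma wordInv_take (P : List (α × Bool)) (j : ℕ) :
    (wordInv P).take j = wordInv (P.drop (P.length - j)) := by
  simp only [wordInv, List.take_reverse, List.length_map]
  rw [← List.map_drop]

lemma mem_wordInv_snd {P : List (α × Bool)} {q : α × Bool} (h : q ∈ wordInv P) :
    ∃ p ∈ P, q.2 = !p.2 := by
  simp only [wordInv, List.mem_reverse, List.mem_map] at h
  obtain ⟨p, hp, rfl⟩ := h
  exact ⟨p, hp, rfl⟩

/-- Maximal cancellation when concatenating two reduced words. -/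
lemma exists_cancel : ∀ (L₂ L₁ : List (α × Bool)), List.Chain' NC L₁ → List.Chain' NC L₂ →
    ∃ k, k ≤ L₁.length ∧ k ≤ L₂.length ∧
      L₁.drop (L₁.length - k) = wordInv (L₂.take k) ∧
      FreeGroup.reduce (L₁ ++ L₂) = L₁.take (L₁.length - k) ++ L₂.drop k := by
  intro L₂
  induction L₂ with
  | nil =>
    intro L₁ h1 _
    exact ⟨0, Nat.zero_le _, Nat.zero_le _, by simp [wordInv],
      by simpa using reduce_eq_self_of_chain h1⟩
  | cons y t₂ ih =>
    intro L₁ h1 h2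
    rcases L₁.eq_nil_or_concat with rfl | ⟨t₁, x, rfl⟩
    · exact ⟨0, Nat.zero_le _, Nat.zero_le _, by simp [wordInv],
        by simpa using reduce_eq_self_of_chain h2⟩
    · rw [List.concat_eq_append] at *
      by_cases hxy : x.1 = y.1 ∧ x.2 = !y.2
      · -- cancellation step
        have ht1 : List.Chain' NC t₁ := h1.prefix ⟨[x], rfl⟩
        have ht2 : List.Chain' NC t₂ := (List.isChain_cons.mp h2).2
        obtain ⟨k, hk1, hk2, hmatch, hred⟩ := ih t₁ ht1 ht2
        have hx : x = (y.1, !y.2) := by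
          ext
          · exact hxy.1
          · simpa using hxy.2
        have hstep : FreeGroup.Red.Step ((t₁ ++ [x]) ++ y :: t₂) (t₁ ++ t₂) := by
          have : (t₁ ++ [x]) ++ y :: t₂ = t₁ ++ (y.1, !y.2) :: (y.1, y.2) :: t₂ := by
            rw [hx]; simp
          rw [this]
          have := @FreeGroup.Red.Step.not α t₁ t₂ y.1 (!y.2)
          simpa using this
        refine ⟨k + 1, ?_, ?_, ?_, ?_⟩
        · simp; omega
        · simp; omega
        · have hlen : (t₁ ++ [x]).length = t₁.length + 1 := by simp
          rw [hlen]
          have harith : t₁.length + 1 - (k + 1) = t₁.length - k := by omega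
          rw [harith, List.drop_append_of_le_length (by omega),
            List.take_succ_cons, wordInv_cons, hmatch, hx]
        · rw [FreeGroup.reduce.Step.eq hstep, hred]
          have hlen : (t₁ ++ [x]).length = t₁.length + 1 := by simp
          rw [hlen]
          have harith : t₁.length + 1 - (k + 1) = t₁.length - k := by omega
          rw [harith, List.take_append_of_le_length (by omega), List.drop_succ_cons]
      · -- no cancellation
        refine ⟨0, Nat.zero_le _, Nat.zero_le _, by simp [wordInv], ?_⟩
        have hch : List.Chain' NC ((t₁ ++ [x]) ++ y :: t₂) := by
          refine h1.append h2 ?_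
          intro a ha b hb
          simp at ha hb
          rw [← ha, ← hb]
          exact hxy
        rw [Nat.sub_zero, List.take_length, List.drop_zero]
        exact reduce_eq_self_of_chain hch

lemma drop_drop_eq {β : Type} (P : List β) (j m : ℕ) (hj : j ≤ P.length)
    (h : m ≤ P.length - j) :
    (P.drop j).drop ((P.drop j).length - m) = P.drop (P.length - m) := by
  rw [List.drop_drop, List.length_drop]
  congr 1
  omega

lemma wordInv_drop_drop (P : List (α × Bool)) (j m : ℕ) (hj : j ≤ P.length)
    (h : m ≤ P.length - j) :
    ((wordInv P).drop j).drop (((wordInv P).drop j).length - m) = wordInv (P.take m) := by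
  rw [List.drop_drop, List.length_drop, wordInv_length, wordInv_drop]
  congr 1
  congr 1
  omega

end Words
section Main

variable {A : Type} [DecidableEq A]

/-- the signed word for a single signed letter under the substitution `u`. -/
def Wrd (u : A → List A) (p : A × Bool) : List (A × Bool) :=
  if p.2 then signed (u p.1) else wordInv (signed (u p.1))

lemma signed_length (l : List A) : (signed l).length = l.length := by simp [signed]

lemma Wrd_length (u : A → List A) (p : A × Bool) : (Wrd u p).length = (u p.1).length := by
  unfold Wrd; split <;> simp [wordInv_length, signed_length]

lemma mem_signed_snd {l : List A} {q : A × Bool} (h : q ∈ signed l) : q.2 = true := by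
  simp only [signed, List.mem_map] at h; obtain ⟨c, _, rfl⟩ := h; rfl

lemma mem_Wrd_snd {u : A → List A} {p : A × Bool} {q : A × Bool} (h : q ∈ Wrd u p) :
    q.2 = p.2 := by
  unfold Wrd at h
  rcases hp : p.2 with _ | _ <;> rw [hp] at h <;> simp at h
  · obtain ⟨pp, hpp, h2⟩ := mem_wordInv_snd h
    rw [mem_signed_snd hpp] at h2
    exact h2
  · exact mem_signed_snd h

lemma chain_Wrd (u : A → List A) (p : A × Bool) : List.Chain' NC (Wrd u p) := by
  have : ∀ (L : List (A × Bool)) (c : Bool), (∀ q ∈ L, q.2 = c) → List.Chain' NC L := by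
    intro L c hL
    induction L with
    | nil => exact List.isChain_nil
    | cons x t ih =>
      simp only [List.Chain', List.isChain_cons]
      refine ⟨?_, ih fun q hq => hL q (List.mem_cons_of_mem x hq)⟩
      intro y hy
      have hx : x.2 = c := hL x (List.mem_cons_self (a := x) (l := t))
      have hyc : y.2 = c := hL y (List.mem_cons_of_mem x (List.mem_of_mem_head? hy))
      intro hcon
      rw [hx, hyc] at hcon
      simp at hcon
  exact this _ p.2 fun q hq => mem_Wrd_snd hq

lemma U_eq_mk (u : A → List A) (a : A) :
    evalPos FreeGroup.of (u a) = FreeGroup.mk (signed (u a)) := by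
  have : ∀ l : List A, evalPos FreeGroup.of l = FreeGroup.mk (signed l) := by
    intro l
    induction l with
    | nil => rfl
    | cons c t ih =>
      show FreeGroup.of c * evalPos FreeGroup.of t = _
      rw [ih]
      show FreeGroup.mk [(c, true)] * _ = _
      rw [FreeGroup.mul_mk]
      rfl
  exact this _

lemma lift_single (u : A → List A) (p : A × Bool) :
    FreeGroup.lift (fun a => evalPos FreeGroup.of (u a)) (FreeGroup.mk [p]) =
      FreeGroup.mk (Wrd u p) := by
  obtain ⟨a, b⟩ := p
  cases b
  · have h1 : (FreeGroup.mk [(a, false)] : FreeGroup A) = (FreeGroup.of a)⁻¹ := by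
      rw [show (FreeGroup.of a : FreeGroup A) = FreeGroup.mk [(a, true)] from rfl,
        FreeGroup.inv_mk]
      rfl
    rw [h1, map_inv, FreeGroup.lift_apply_of, U_eq_mk, FreeGroup.inv_mk]
    rfl
  · rw [show (FreeGroup.mk [(a, true)] : FreeGroup A) = FreeGroup.of a from rfl,
      FreeGroup.lift_apply_of, U_eq_mk]
    rfl

/-- Main induction: the image of a reduced word ends in a large chunk of the
last block. -/
lemma main_suffix (u : A → List A) (hu : FamC12 fun a => signed (u a))
    (hne : ∀ a, u a ≠ []) :
    ∀ (w : List (A × Bool)) (p : A × Bool), List.Chain' NC (w ++ [p]) →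
      ∃ r k, (FreeGroup.lift (fun a => evalPos FreeGroup.of (u a))
          (FreeGroup.mk (w ++ [p]))).toWord = r ++ (Wrd u p).drop k ∧
        12 * k < (u p.1).length := by
  intro w
  induction w using List.reverseRecOn with
  | nil =>
    intro p _
    refine ⟨[], 0, ?_, ?_⟩
    · rw [List.nil_append, lift_single, FreeGroup.toWord_mk,
        reduce_eq_self_of_chain (chain_Wrd u p), List.drop_zero, List.nil_append]
    · simpa using List.length_pos_iff.mpr (hne p.1)
  | append_singleton l q ih =>
    intro p hch
    set F := FreeGroup.lift (fun a => evalPos FreeGroup.of (u a)) with hF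
    have hch' : List.Chain' NC (l ++ [q]) := hch.prefix ⟨[p], by simp⟩
    obtain ⟨r', k', hw', hk'⟩ := ih q hch'
    set L₁ := (F (FreeGroup.mk (l ++ [q]))).toWord with hL₁
    set L₂ := Wrd u p with hL₂
    have hm'' : L₂.length = (u p.1).length := Wrd_length u p
    have hmpos'' : 0 < (u p.1).length := List.length_pos_iff.mpr (hne p.1)
    have hmpos' : 0 < (u q.1).length := List.length_pos_iff.mpr (hne q.1)
    have hqp : NC q p := by
      have h3 := (List.isChain_append.mp hch).2.2
      apply h3 q _ p
      · simp
      · simp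
    have hsplit : F (FreeGroup.mk (l ++ [q] ++ [p])) = FreeGroup.mk (L₁ ++ L₂) := by
      rw [← FreeGroup.mul_mk, map_mul, lift_single]
      conv_lhs => rw [← FreeGroup.mk_toWord (x := F (FreeGroup.mk (l ++ [q])))]
      rw [FreeGroup.mul_mk]
    obtain ⟨k, hkL₁, hkL₂, hmatch, hredEq⟩ :=
      exists_cancel L₂ L₁ (chain_toWord _) (chain_Wrd u p)
    have htw : (F (FreeGroup.mk (l ++ [q] ++ [p]))).toWord
        = L₁.take (L₁.length - k) ++ L₂.drop k := by
      rw [hsplit, FreeGroup.toWord_mk, hredEq]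
    by_cases hk0 : k = 0
    · subst hk0
      exact ⟨L₁.take (L₁.length - 0), 0, htw, by simpa using hmpos''⟩
    -- now k > 0
    set s' := (Wrd u q).drop k' with hs'
    have hsL' : s'.length = (u q.1).length - k' := by
      rw [hs', List.length_drop, Wrd_length]
    have hsL'pos : 0 < s'.length := by omega
    set m := min k s'.length with hm
    have hm1 : 1 ≤ m := by omega
    have hmk : m ≤ k := Nat.min_le_left _ _
    have hms : m ≤ s'.length := Nat.min_le_right _ _
    have hL₁len : L₁.length = r'.length + s'.length := by rw [hw']; simp
    -- E1
    have E1 : L₁.drop (L₁.length - m) = s'.drop (s'.length - m) := by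
      have : L₁.length - m = r'.length + (s'.length - m) := by omega
      rw [this, hw', List.drop_append]; simp
    -- E2
    have E2 : L₁.drop (L₁.length - m) = wordInv (L₂.take m) := by
      have h1 : L₁.drop (L₁.length - m) = (L₁.drop (L₁.length - k)).drop (k - m) := by
        rw [List.drop_drop]
        congr 1
        omega
      rw [h1, hmatch, wordInv_drop, List.length_take]
      congr 1
      rw [List.take_take]
      congr 1
      omega
    have E : s'.drop (s'.length - m) = wordInv (L₂.take m) := by rw [← E1, E2]
    -- sign analysis
    have hlenE : (s'.drop (s'.length - m)).length = m := by
      rw [List.length_drop]; omega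
    have hne2 : s'.drop (s'.length - m) ≠ [] := by
      intro hc
      rw [hc] at hlenE
      simp at hlenE
      omega
    obtain ⟨z, hz⟩ := List.exists_mem_of_ne_nil _ hne2
    have hz1 : z ∈ Wrd u q := List.mem_of_mem_drop (List.mem_of_mem_drop hz)
    have hzq : z.2 = q.2 := mem_Wrd_snd hz1
    have hz2 : z ∈ wordInv (L₂.take m) := E ▸ hz
    have hzp : z.2 = !p.2 := by
      obtain ⟨pp, hpp, h2⟩ := mem_wordInv_snd hz2
      have : pp ∈ Wrd u p := List.mem_of_mem_take hpp
      rw [h2, mem_Wrd_snd this]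
    have hsign : q.2 = !p.2 := by rw [← hzq, hzp]
    have hq1p1 : q.1 ≠ p.1 := fun h => hqp ⟨h, hsign⟩
    -- piece bound
    have hpiece : 12 * m < min (u q.1).length (u p.1).length := by
      have hnab : ¬(q.1 = p.1 ∧ (True : Prop)) := fun hc => hq1p1 hc.1
      rcases hp2 : p.2 with _ | _
      · -- p.2 = false, q.2 = true
        have hq2 : q.2 = true := by rw [hsign, hp2]; rfl
        set Q := signed (u q.1) with hQ
        set P₂ := signed (u p.1) with hP₂
        have hQlen : Q.length = (u q.1).length := signed_length _
        have hPlen : P₂.length = (u p.1).length := signed_length _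
        have hWq : Wrd u q = Q := by unfold Wrd; rw [hq2]; simp; rfl
        have hWp : L₂ = wordInv P₂ := by rw [hL₂]; unfold Wrd; rw [hp2]; simp; rfl
        have hQs : s'.length = Q.length - k' := by
          rw [hs', hWq, List.length_drop]
        have hLHS : s'.drop (s'.length - m) = Q.drop (Q.length - m) := by
          rw [hs', hWq]
          exact drop_drop_eq Q k' m (by omega) (by omega)
        have hRHS : wordInv (L₂.take m) = P₂.drop (P₂.length - m) := by
          rw [hWp, wordInv_take, wordInv_wordInv]
        have hsuf : Q.drop (Q.length - m) = P₂.drop (P₂.length - m) := by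
          rw [← hLHS, E, hRHS]
        have hmQ : m ≤ Q.length := by omega
        have hmP : m ≤ P₂.length := by
          have : m ≤ L₂.length := le_trans hmk hkL₂
          rw [hWp, wordInv_length] at this
          exact this
        have huu := List.rotate_eq_drop_append_take (l := Q) (n := Q.length - m)
          (by omega)
        have hvv := List.rotate_eq_drop_append_take (l := P₂) (n := P₂.length - m)
          (by omega)
        have hpfx1 : Q.drop (Q.length - m) <+: Q.rotate (Q.length - m) :=
          ⟨Q.take (Q.length - m), huu.symm⟩
        have hpfx2 : Q.drop (Q.length - m) <+: P₂.rotate (P₂.length - m) := by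
          rw [hvv, hsuf]
          exact ⟨P₂.take (P₂.length - m), rfl⟩
        have := hu q.1 p.1 (Q.rotate (Q.length - m)) (P₂.rotate (P₂.length - m))
          ⟨Q.length - m, Or.inl rfl⟩ ⟨P₂.length - m, Or.inl rfl⟩
          (fun hc => hq1p1 hc.1) _ hpfx1 hpfx2
        rw [List.length_drop] at this
        simp only [List.length_rotate] at this
        have hmm : Q.length - (Q.length - m) = m := by omega
        rw [hmm] at this
        omega
      · -- p.2 = true, q.2 = false
        have hq2 : q.2 = false := by rw [hsign, hp2]; rfl
        set Q := signed (u q.1) with hQ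
        set P₂ := signed (u p.1) with hP₂
        have hQlen : Q.length = (u q.1).length := signed_length _
        have hPlen : P₂.length = (u p.1).length := signed_length _
        have hWq : Wrd u q = wordInv Q := by unfold Wrd; rw [hq2]; simp; rfl
        have hWp : L₂ = P₂ := by rw [hL₂]; unfold Wrd; rw [hp2]; simp; rfl
        have hQs : s'.length = Q.length - k' := by
          rw [hs', hWq, List.length_drop, wordInv_length]
        have hLHS : s'.drop (s'.length - m) = wordInv (Q.take m) := by
          rw [hs', hWq]
          exact wordInv_drop_drop Q k' m (by omega) (by omega)
        have hprefEq : Q.take m = P₂.take m := by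
          apply wordInv_injective
          rw [← hLHS, E, hWp]
        have hmQ : m ≤ Q.length := by omega
        have hmP : m ≤ P₂.length := by
          have : m ≤ L₂.length := le_trans hmk hkL₂
          rw [hWp] at this
          exact this
        have hpfx1 : Q.take m <+: Q := List.take_prefix _ _
        have hpfx2 : Q.take m <+: P₂ := hprefEq ▸ List.take_prefix m P₂
        have := hu q.1 p.1 Q P₂ ⟨0, Or.inl (List.rotate_zero Q).symm⟩
          ⟨0, Or.inl (List.rotate_zero P₂).symm⟩ (fun hc => hq1p1 hc.1) _ hpfx1 hpfx2
        rw [List.length_take] at this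
        have hmm : min m Q.length = m := by omega
        rw [hmm] at this
        omega
    -- finish
    have hms' : m < s'.length := by
      by_contra hge
      have hmeq : m = s'.length := by omega
      have h12 : 12 * s'.length < (u q.1).length := by
        rw [← hmeq]
        exact lt_of_lt_of_le hpiece (by omega)
      omega
    have hkm : m = k := by omega
    refine ⟨L₁.take (L₁.length - k), k, htw, ?_⟩
    rw [← hkm]
    exact lt_of_lt_of_le hpiece (by omega)

end Main
end Paper

namespace Paper
set_option linter.unusedSectionVars false

section Inj
variable {A : Type} [DecidableEq A]

lemma liftU_injective (u : A → List A) (hu : FamC12 fun a => signed (u a))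
    (hne : ∀ a, u a ≠ []) :
    Function.Injective (FreeGroup.lift fun a => evalPos FreeGroup.of (u a)) := by
  rw [injective_iff_map_eq_one]
  intro g hg
  by_contra hg1
  have hw : g.toWord ≠ [] := fun hc => hg1 (FreeGroup.toWord_eq_nil_iff.mp hc)
  rcases g.toWord.eq_nil_or_concat with hc | ⟨w, p, hc⟩
  · exact hw hc
  · rw [List.concat_eq_append] at hc
    have hch : List.Chain' NC (w ++ [p]) := by
      rw [← hc]; exact chain_toWord g
    obtain ⟨r, k, htw, hk⟩ := main_suffix u hu hne w p hch
    rw [← hc, FreeGroup.mk_toWord, hg, FreeGroup.toWord_one] at htw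
    have hlen := congrArg List.length htw
    rw [List.length_nil, List.length_append, List.length_drop, Wrd_length] at hlen
    omega

end Inj

section Proj
variable {A : Type}

lemma lift_evalPos {G H : Type} [Group G] [Group H] (φ : G →* H) (f : A → G)
    (w : List A) : φ (evalPos f w) = evalPos (fun a => φ (f a)) w := by
  simp [evalPos, map_list_prod, List.map_map, Function.comp_def]

lemma evalPos_one {G : Type} [Group G] (w : List A) :
    evalPos (fun _ => (1 : G)) w = 1 := by
  apply List.prod_eq_one
  simp

/-- The retraction of `H(A)` onto the free group on `A`, killing `B`, `X`, `Y`. -/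
def projA (d : HData A) : HGroup d →* FreeGroup A :=
  PresentedGroup.toGroup (f := Sum.elim FreeGroup.of fun _ => (1 : FreeGroup A)) (by
    intro r hr
    rcases hr with ((⟨a, x, rfl⟩ | ⟨a, y, rfl⟩) | ⟨b, x, rfl⟩) | ⟨b, y, rfl⟩ <;>
      simp [gA, gB, gX, gY, inA, inB, inX, inY, map_mul, map_inv,
        lift_evalPos, FreeGroup.lift_apply_of, evalPos_one])

lemma projA_muH (d : HData A) (md : MuData A) (a : A) :
    projA d (muH d md a) = evalPos FreeGroup.of (md.u a) := by
  unfold muH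
  rw [map_mul, lift_evalPos, lift_evalPos]
  have h1 : ∀ a' : A, projA d (PresentedGroup.of (inA a')) = FreeGroup.of a' := by
    intro a'
    exact PresentedGroup.toGroup.of _
  have h2 : ∀ x : Bool, projA d (PresentedGroup.of (inX x) : HGroup d) = 1 := by
    intro x
    exact PresentedGroup.toGroup.of _
  simp only [h1, h2, evalPos_one, mul_one]

end Proj
end Paper

namespace Paper

/-- The subgroup `E` of `H(A)` generated by the elements `μ(a) = u_a v_a`
(`a ∈ A`) is free, freely generated by `{μ(a) : a ∈ A}`: the induced
homomorphism from the free group on `A` is injective. -/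
theorem E_free_on_mu {A : Type} (d : HData A) (hC : d.C12cond)
    (md : MuData A) (hmd : md.OK) :
    Function.Injective (FreeGroup.lift (muH d md) : FreeGroup A →* HGroup d) := by
  letI : DecidableEq A := Classical.decEq A
  have hinj := liftU_injective md.u hmd.1 hmd.2.2.1
  have hcomp : (projA d).comp (FreeGroup.lift (muH d md)) =
      FreeGroup.lift fun a => evalPos FreeGroup.of (md.u a) := by
    apply FreeGroup.ext_hom
    intro a
    rw [MonoidHom.comp_apply, FreeGroup.lift_apply_of, FreeGroup.lift_apply_of]
    exact projA_muH d md a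
  have h2 : Function.Injective (⇑(projA d) ∘ ⇑(FreeGroup.lift (muH d md))) := by
    rw [← MonoidHom.coe_comp, hcomp]
    exact hinj
  exact h2.of_comp

end Paper
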